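/- Let Z₁, Z₂, Z₃ be independent standard normal random variables and σ > 0, γ > 0. Then the law of γ Z₂/Z₁ + σ Z₃ equals the law of √(σ² + γ²/Z₁'²) · Z, where Z₁', Z are independent standard normals; equivalently, both have the centered Voigt(γ, σ²) distribution whose density is the convolution of the Cauchy(0, γ) and N(0, σ²) densities. -/

import Mathlib

open MeasureTheory ProbabilityTheory Real

/-- The centered Voigt(γ, σ²) density: the convolution of the Cauchy(0, γ) density with
the N(0, σ²) density. -/
noncomputable def voigtDensity (σ γ : ℝ) (u : ℝ) : ℝ :=
  ∫ x : ℝ, (γ / (π * (x ^ 2 + γ ^ 2))) *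
    (1 / (σ * Real.sqrt (2 * π)) * Real.exp (-(u - x) ^ 2 / (2 * σ ^ 2)))

open Set

namespace VoigtAux

noncomputable def f (v : ℝ) (x : ℝ) : ℝ := (Real.sqrt (2 * π * v))⁻¹ * Real.exp (-x ^ 2 / (2 * v))

lemma f_nonneg (v x : ℝ) : 0 ≤ f v x := by
  unfold f; positivity

lemma f_eq_gaussianPDFReal {v : ℝ} (hv : 0 ≤ v) (x : ℝ) :
    f v x = gaussianPDFReal 0 v.toNNReal x := by
  unfold f gaussianPDFReal
  rw [Real.coe_toNNReal _ hv, sub_zero]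

lemma measurable_f (v : ℝ) : Measurable (f v) := by
  unfold f; fun_prop

lemma integrable_f {v : ℝ} (hv : 0 ≤ v) : Integrable (f v) := by
  have := integrable_gaussianPDFReal 0 v.toNNReal
  exact this.congr (Filter.Eventually.of_forall fun x => (f_eq_gaussianPDFReal hv x).symm)

lemma f_le {v : ℝ} (hv : 0 ≤ v) (x : ℝ) : f v x ≤ (Real.sqrt (2 * π * v))⁻¹ := by
  unfold f
  have h1 : Real.exp (-x ^ 2 / (2 * v)) ≤ 1 := by
    apply Real.exp_le_one_iff.mpr
    exact div_nonpos_of_nonpos_of_nonneg (neg_nonpos.mpr (sq_nonneg x)) (by linarith)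
  calc (Real.sqrt (2 * π * v))⁻¹ * Real.exp (-x ^ 2 / (2 * v))
      ≤ (Real.sqrt (2 * π * v))⁻¹ * 1 :=
        mul_le_mul_of_nonneg_left h1 (by positivity)
    _ = _ := mul_one _

-- integral of |z| exp(-a z^2)

lemma integral_abs_mul_exp_neg_mul_sq {a : ℝ} (ha : 0 < a) :
    ∫ z : ℝ, |z| * Real.exp (-a * z ^ 2) = a⁻¹ := by
  have h1 : (fun z : ℝ => |z| * Real.exp (-a * z ^ 2))
      = (fun z => (fun t => t * Real.exp (-a * t ^ 2)) |z|) := by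
    funext z
    simp [sq_abs]
  rw [h1, integral_comp_abs (f := fun t => t * Real.exp (-a * t ^ 2))]
  have h2 : ∫ z in Ioi (0:ℝ), z * Real.exp (-a * z ^ 2) = (2 * a)⁻¹ := by
    have A : ∀ x : ℝ, HasDerivAt (fun t => -(2 * a)⁻¹ * Real.exp (-a * t ^ 2))
        (x * Real.exp (-a * x ^ 2)) x := by
      intro x
      convert ((hasDerivAt_pow 2 x).const_mul (-a)).exp.const_mul (-(2 * a)⁻¹) using 1
      · rfl
      · rfl
      have ha' : a ≠ 0 := ha.ne'
      field_simp
      ring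
    have B : Filter.Tendsto (fun y : ℝ => -(2 * a)⁻¹ * Real.exp (-a * y ^ 2))
        Filter.atTop (nhds (-(2 * a)⁻¹ * 0)) := by
      refine Filter.Tendsto.const_mul _ ?_
      exact Real.tendsto_exp_atBot.comp
        ((Filter.tendsto_pow_atTop two_ne_zero).const_mul_atTop_of_neg (neg_lt_zero.2 ha))
    have := integral_Ioi_of_hasDerivAt_of_tendsto' (a := (0:ℝ)) (fun x _ => A x)
      (integrable_mul_exp_neg_mul_sq ha).integrableOn B
    rw [this]
    simp
  rw [h2]
  rw [mul_inv]
  ring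

lemma f_conv {a b : ℝ} (ha : 0 < a) (hb : 0 < b) (u : ℝ) :
    ∫ x : ℝ, f a x * f b (u - x) = f (a + b) u := by
  have hab : 0 < a + b := by linarith
  set k : ℝ := (a + b) / (2 * a * b) with hk
  have hkpos : 0 < k := by positivity
  set m : ℝ := a * u / (a + b) with hm
  have key : (fun x : ℝ => f a x * f b (u - x))
      = fun x => ((Real.sqrt (2*π*a))⁻¹ * (Real.sqrt (2*π*b))⁻¹ * Real.exp (-u^2/(2*(a+b))))
        * Real.exp (-k * (x - m)^2) := by
    funext x
    unfold f
    rw [mul_mul_mul_comm, ← Real.exp_add, mul_assoc ((Real.sqrt (2*π*a))⁻¹ * (Real.sqrt (2*π*b))⁻¹),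
      ← Real.exp_add]
    congr 1
    rw [Real.exp_eq_exp, hk, hm]
    field_simp
    ring
  rw [key, integral_const_mul]
  rw [show (fun x : ℝ => Real.exp (-k * (x - m)^2)) = fun x => (fun y => Real.exp (-k * y^2)) (x - m) from rfl]
  rw [integral_sub_right_eq_self (fun y : ℝ => Real.exp (-k * y^2)) m]
  rw [integral_gaussian]
  unfold f
  have hc : (Real.sqrt (2*π*a))⁻¹ * (Real.sqrt (2*π*b))⁻¹ * Real.sqrt (π/k)
      = (Real.sqrt (2*π*(a+b)))⁻¹ := by
    rw [← Real.sqrt_inv, ← Real.sqrt_inv, ← Real.sqrt_inv, ← Real.sqrt_mul (by positivity),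
      ← Real.sqrt_mul (by positivity)]
    congr 1
    rw [hk]
    field_simp
  calc (Real.sqrt (2*π*a))⁻¹ * (Real.sqrt (2*π*b))⁻¹ * Real.exp (-u^2/(2*(a+b))) * Real.sqrt (π/k)
      = ((Real.sqrt (2*π*a))⁻¹ * (Real.sqrt (2*π*b))⁻¹ * Real.sqrt (π/k)) * Real.exp (-u^2/(2*(a+b))) := by ring
    _ = (Real.sqrt (2*π*(a+b)))⁻¹ * Real.exp (-u^2/(2*(a+b))) := by rw [hc]

lemma f_zero (x : ℝ) : f 0 x = 0 := by
  unfold f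
  simp

lemma f_cauchy_fun {γ : ℝ} (hγ : 0 < γ) (x : ℝ) :
    (fun z : ℝ => f 1 z * f (γ^2/z^2) x)
      = fun z => (2*π*γ)⁻¹ * (|z| * Real.exp (-((γ^2 + x^2)/(2*γ^2)) * z^2)) := by
  funext z
  rcases eq_or_ne z 0 with hz | hz
  · subst hz
    simp [f_zero]
  · have hz2 : (0:ℝ) < z^2 := by positivity
    unfold f
    have h1 : Real.sqrt (2*π*(γ^2/z^2)) = Real.sqrt (2*π) * (γ/|z|) := by
      rw [Real.sqrt_mul (by positivity : (0:ℝ) ≤ 2*π), show γ^2/z^2 = (γ/z)^2 by ring,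
        Real.sqrt_sq_eq_abs, abs_div, abs_of_pos hγ]
    rw [h1]
    have habs : |z| ≠ 0 := abs_ne_zero.mpr hz
    have hsq : Real.sqrt (2*π) * Real.sqrt (2*π) = 2*π := Real.mul_self_sqrt (by positivity)
    rw [mul_mul_mul_comm, ← Real.exp_add]
    rw [show (2*π*γ)⁻¹ * (|z| * Real.exp (-((γ^2 + x^2)/(2*γ^2)) * z^2))
        = ((2*π*γ)⁻¹ * |z|) * Real.exp (-((γ^2 + x^2)/(2*γ^2))*z^2) by ring]
    congr 1
    · rw [mul_one, ← mul_inv, ← mul_assoc, hsq]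
      rw [show 2*π*(γ/|z|) = 2*π*γ/|z| by ring, inv_div]
      field_simp
    · rw [Real.exp_eq_exp]
      field_simp
      ring

lemma integrable_f_cauchy {γ : ℝ} (hγ : 0 < γ) (x : ℝ) :
    Integrable (fun z : ℝ => f 1 z * f (γ^2/z^2) x) := by
  rw [f_cauchy_fun hγ x]
  have hapos : (0:ℝ) < (γ^2 + x^2)/(2*γ^2) := by positivity
  apply Integrable.const_mul
  apply ((integrable_mul_exp_neg_mul_sq hapos).abs).congr
  refine Filter.Eventually.of_forall fun z => ?_
  show |z * _| = |z| * _
  rw [abs_mul, abs_of_pos (Real.exp_pos _)]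

lemma f_cauchy {γ : ℝ} (hγ : 0 < γ) (x : ℝ) :
    ∫ z : ℝ, f 1 z * f (γ^2/z^2) x = γ / (π * (x^2 + γ^2)) := by
  have hapos : (0:ℝ) < (γ^2 + x^2)/(2*γ^2) := by positivity
  rw [f_cauchy_fun hγ x, integral_const_mul, integral_abs_mul_exp_neg_mul_sq hapos]
  field_simp
  ring

lemma integrable_f_mul {a b : ℝ} (ha : 0 ≤ a) (hb : 0 ≤ b) (u : ℝ) :
    Integrable (fun x : ℝ => f a x * f b (u - x)) := by
  apply Integrable.mono' ((integrable_f ha).const_mul (Real.sqrt (2*π*b))⁻¹)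
  · exact ((measurable_f a).mul ((measurable_f b).comp (measurable_const.sub measurable_id))).aestronglyMeasurable
  · refine Filter.Eventually.of_forall fun x => ?_
    rw [Real.norm_eq_abs, abs_of_nonneg (mul_nonneg (f_nonneg _ _) (f_nonneg _ _))]
    calc f a x * f b (u - x) ≤ f a x * (Real.sqrt (2*π*b))⁻¹ :=
          mul_le_mul_of_nonneg_left (f_le hb _) (f_nonneg _ _)
      _ = (Real.sqrt (2*π*b))⁻¹ * f a x := mul_comm _ _

lemma lintegral_f_mul {a b : ℝ} (ha : 0 < a) (hb : 0 < b) (u : ℝ) :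
    ∫⁻ x : ℝ, ENNReal.ofReal (f a x) * ENNReal.ofReal (f b (u - x))
      = ENNReal.ofReal (f (a + b) u) := by
  have h1 : ∀ x : ℝ, ENNReal.ofReal (f a x) * ENNReal.ofReal (f b (u - x))
      = ENNReal.ofReal (f a x * f b (u - x)) := fun x =>
    (ENNReal.ofReal_mul (f_nonneg _ _)).symm
  simp_rw [h1]
  rw [← ofReal_integral_eq_lintegral_ofReal (integrable_f_mul ha.le hb.le u)
    (Filter.Eventually.of_forall fun x => mul_nonneg (f_nonneg _ _) (f_nonneg _ _))]
  rw [f_conv ha hb]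

lemma gaussianReal_eq {v : ℝ} (hv : 0 < v) :
    gaussianReal 0 v.toNNReal = volume.withDensity fun x => ENNReal.ofReal (f v x) := by
  rw [gaussianReal_of_var_ne_zero _ (Real.toNNReal_pos.mpr hv).ne']
  congr 1
  funext x
  rw [gaussianPDF]
  rw [f_eq_gaussianPDFReal hv.le]

lemma gaussian_sum {a b : ℝ} (ha : 0 < a) (hb : 0 < b) :
    ((gaussianReal 0 a.toNNReal).prod (gaussianReal 0 b.toNNReal)).map
        (fun p : ℝ × ℝ => p.1 + p.2) = gaussianReal 0 (a + b).toNNReal := by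
  ext s hs
  have hadd : Measurable (fun p : ℝ × ℝ => p.1 + p.2) := by fun_prop
  rw [Measure.map_apply hadd hs, Measure.prod_apply (hadd hs)]
  have h1 : ∀ x : ℝ,
      (gaussianReal 0 b.toNNReal) (Prod.mk x ⁻¹' ((fun p : ℝ × ℝ => p.1 + p.2) ⁻¹' s))
      = ∫⁻ u, s.indicator (fun u => ENNReal.ofReal (f b (u - x))) u := by
    intro x
    have hpre : Prod.mk x ⁻¹' ((fun p : ℝ × ℝ => p.1 + p.2) ⁻¹' s) = (fun y => x + y) ⁻¹' s := rfl
    have hsm : MeasurableSet ((fun y : ℝ => x + y) ⁻¹' s) := hs.preimage (by fun_prop)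
    rw [hpre, gaussianReal_eq hb, withDensity_apply _ hsm, ← lintegral_indicator hsm]
    have h2 : ∀ y : ℝ, ((fun y : ℝ => x + y) ⁻¹' s).indicator (fun y => ENNReal.ofReal (f b y)) y
        = (fun u => s.indicator (fun u => ENNReal.ofReal (f b (u - x))) u) (x + y) := by
      intro y
      simp only [Set.indicator_apply, Set.mem_preimage]
      by_cases hy : x + y ∈ s <;> simp [hy]
    simp_rw [h2]
    exact lintegral_add_left_eq_self _ x
  simp_rw [h1]
  rw [gaussianReal_eq ha,
    lintegral_withDensity_eq_lintegral_mul _ (by exact (measurable_f a).ennreal_ofReal) ?hmeas]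
  case hmeas =>
    apply Measurable.lintegral_prod_right (f := fun x u => s.indicator (fun u => ENNReal.ofReal (f b (u - x))) u)
    apply Measurable.indicator ?_ ?_
    · exact ((measurable_f b).comp (measurable_snd.sub measurable_fst)).ennreal_ofReal
    · exact measurable_snd hs
  have hstep : ∀ x : ℝ, ENNReal.ofReal (f a x)
        * ∫⁻ u, s.indicator (fun u => ENNReal.ofReal (f b (u - x))) u
      = ∫⁻ u, ENNReal.ofReal (f a x) * s.indicator (fun u => ENNReal.ofReal (f b (u - x))) u :=
    fun x => (lintegral_const_mul' _ _ ENNReal.ofReal_ne_top).symm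
  simp only [Pi.mul_apply]
  simp_rw [hstep]
  rw [lintegral_lintegral_swap]
  · have h3 : ∀ u : ℝ,
        (∫⁻ x, ENNReal.ofReal (f a x) * s.indicator (fun u => ENNReal.ofReal (f b (u - x))) u)
        = s.indicator (fun u => ENNReal.ofReal (f (a + b) u)) u := by
      intro u
      by_cases hu : u ∈ s
      · simp only [Set.indicator_of_mem hu]
        exact lintegral_f_mul ha hb u
      · simp only [Set.indicator_of_notMem hu, mul_zero, lintegral_zero]
    rw [lintegral_congr h3]
    rw [lintegral_indicator hs, gaussianReal_eq (by linarith : (0:ℝ) < a + b),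
      withDensity_apply _ hs]
  · apply AEMeasurable.mul
    · exact ((measurable_f a).comp measurable_fst).ennreal_ofReal.aemeasurable
    · apply Measurable.aemeasurable
      apply Measurable.indicator
      · exact ((measurable_f b).comp (measurable_snd.sub measurable_fst)).ennreal_ofReal
      · exact measurable_snd hs

lemma toNNReal_sq (c : ℝ) : (c^2).toNNReal = ⟨c^2, sq_nonneg c⟩ :=
  NNReal.coe_injective (by simp [Real.coe_toNNReal _ (sq_nonneg c)]; rfl)

lemma gaussian_comb {c d : ℝ} (hc : c ≠ 0) (hd : d ≠ 0) :
    ((gaussianReal 0 1).prod (gaussianReal 0 1)).map (fun p : ℝ × ℝ => c * p.1 + d * p.2)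
      = gaussianReal 0 (c^2 + d^2).toNNReal := by
  have hcomp : (fun p : ℝ × ℝ => c * p.1 + d * p.2)
      = (fun p : ℝ × ℝ => p.1 + p.2) ∘ (Prod.map (fun x : ℝ => c * x) (fun x : ℝ => d * x)) := rfl
  rw [hcomp, ← Measure.map_map (by fun_prop) (by fun_prop),
    ← Measure.map_prod_map _ _ (by fun_prop : Measurable (fun x : ℝ => c * x)) (by fun_prop : Measurable (fun x : ℝ => d * x))]
  rw [show (fun x : ℝ => c * x) = (c * ·) from rfl, show (fun x : ℝ => d * x) = (d * ·) from rfl,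
    gaussianReal_map_const_mul, gaussianReal_map_const_mul]
  simp only [mul_zero, mul_one]
  rw [show NNReal.mk (c^2) (sq_nonneg c) = (c^2).toNNReal from (toNNReal_sq c).symm,
    show NNReal.mk (d^2) (sq_nonneg d) = (d^2).toNNReal from (toNNReal_sq d).symm,
    gaussian_sum (by positivity) (by positivity)]

lemma integrable_cauchy {γ : ℝ} (hγ : 0 < γ) :
    Integrable (fun x : ℝ => γ / (π * (x^2 + γ^2))) := by
  set m : ℝ := max 1 (γ⁻¹^2) with hm
  have hm1 : (1:ℝ) ≤ m := le_max_left _ _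
  have hm2 : γ⁻¹^2 ≤ m := le_max_right _ _
  apply Integrable.mono' (integrable_inv_one_add_sq.const_mul (γ/π * m))
  · exact (Measurable.div measurable_const (by fun_prop)).aestronglyMeasurable
  · refine Filter.Eventually.of_forall fun x => ?_
    have ht : (0:ℝ) < x^2 + γ^2 := by positivity
    rw [Real.norm_eq_abs, abs_of_nonneg (by positivity)]
    have key : 1 + x^2 ≤ m * (x^2 + γ^2) := by
      rcases le_total 1 γ with h | h
      · nlinarith [sq_nonneg x]
      · have h3 : γ⁻¹^2 * γ^2 = 1 := by field_simp
        have hγ2 : γ^2 ≤ 1 := by nlinarith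
        have hγ2pos : (0:ℝ) < γ^2 := by positivity
        have h4 : (1:ℝ) ≤ γ⁻¹^2 := by nlinarith
        nlinarith [sq_nonneg x, mul_le_mul_of_nonneg_right hm2 ht.le]
    have hinv : (x^2 + γ^2)⁻¹ ≤ m * (1 + x^2)⁻¹ := by
      rw [← one_div, show m * (1 + x^2)⁻¹ = m / (1 + x^2) from (div_eq_mul_inv m _).symm,
        div_le_div_iff₀ ht (by positivity)]
      linarith
    calc γ / (π * (x^2 + γ^2)) = γ/π * (x^2 + γ^2)⁻¹ := by
          rw [← div_div, div_eq_mul_inv]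
      _ ≤ γ/π * (m * (1 + x^2)⁻¹) :=
          mul_le_mul_of_nonneg_left hinv (by positivity)
      _ = γ/π * m * (1 + x^2)⁻¹ := by ring

lemma f_sigma {σ : ℝ} (hσ : 0 < σ) (t : ℝ) :
    f (σ^2) t = 1 / (σ * Real.sqrt (2*π)) * Real.exp (-t^2 / (2*σ^2)) := by
  unfold f
  rw [Real.sqrt_mul (by positivity : (0:ℝ) ≤ 2*π), Real.sqrt_sq hσ.le, one_div, mul_comm σ]

lemma voigtDensity_eq {σ γ : ℝ} (hσ : 0 < σ) (u : ℝ) :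
    voigtDensity σ γ u = ∫ x : ℝ, (γ / (π * (x^2 + γ^2))) * f (σ^2) (u - x) := by
  unfold voigtDensity
  congr 1
  funext x
  rw [f_sigma hσ]

lemma integrable_voigt_integrand {σ γ : ℝ} (hσ : 0 < σ) (hγ : 0 < γ) (u : ℝ) :
    Integrable (fun x : ℝ => (γ / (π * (x^2 + γ^2))) * f (σ^2) (u - x)) := by
  apply Integrable.mono' ((integrable_cauchy hγ).const_mul (Real.sqrt (2*π*σ^2))⁻¹)
  · apply AEStronglyMeasurable.mul
    · exact (Measurable.div measurable_const (by fun_prop)).aestronglyMeasurable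
    · exact ((measurable_f _).comp (measurable_const.sub measurable_id)).aestronglyMeasurable
  · refine Filter.Eventually.of_forall fun x => ?_
    have hc : (0:ℝ) ≤ γ / (π * (x^2 + γ^2)) := by positivity
    rw [Real.norm_eq_abs, abs_of_nonneg (mul_nonneg hc (f_nonneg _ _))]
    calc (γ / (π * (x^2 + γ^2))) * f (σ^2) (u - x)
        ≤ (γ / (π * (x^2 + γ^2))) * (Real.sqrt (2*π*σ^2))⁻¹ :=
          mul_le_mul_of_nonneg_left (f_le (by positivity) _) hc
      _ = (Real.sqrt (2*π*σ^2))⁻¹ * (γ / (π * (x^2 + γ^2))) := mul_comm _ _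

lemma K_eq {σ γ : ℝ} (hσ : 0 < σ) (hγ : 0 < γ) (u : ℝ) :
    ∫⁻ z : ℝ, ENNReal.ofReal (f 1 z * f (σ^2 + γ^2/z^2) u)
      = ENNReal.ofReal (voigtDensity σ γ u) := by
  have hae : ∀ᵐ z : ℝ, z ≠ 0 := by
    refine ae_iff.mpr ?_
    have : {z : ℝ | ¬ z ≠ 0} = {0} := by ext z; simp
    rw [this, Real.volume_singleton]
  have stepA : ∀ᵐ z : ℝ, ENNReal.ofReal (f 1 z * f (σ^2 + γ^2/z^2) u)
      = ∫⁻ x, ENNReal.ofReal ((f 1 z * f (γ^2/z^2) x) * f (σ^2) (u - x)) := by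
    filter_upwards [hae] with z hz
    have hz2 : (0:ℝ) < γ^2/z^2 := by positivity
    have h1 : f (σ^2 + γ^2/z^2) u = ∫ x, f (γ^2/z^2) x * f (σ^2) (u - x) := by
      rw [f_conv hz2 (by positivity), add_comm]
    rw [h1, ← integral_const_mul]
    rw [ofReal_integral_eq_lintegral_ofReal
      (((integrable_f_mul hz2.le (by positivity) u).const_mul (f 1 z)))
      (Filter.Eventually.of_forall fun x =>
        mul_nonneg (f_nonneg _ _) (mul_nonneg (f_nonneg _ _) (f_nonneg _ _)))]
    congr 1
    funext x
    rw [mul_assoc]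
  rw [lintegral_congr_ae stepA]
  rw [lintegral_lintegral_swap]
  · have stepC : ∀ x : ℝ, (∫⁻ z, ENNReal.ofReal ((f 1 z * f (γ^2/z^2) x) * f (σ^2) (u - x)))
        = ENNReal.ofReal ((γ / (π * (x^2 + γ^2))) * f (σ^2) (u - x)) := by
      intro x
      rw [← ofReal_integral_eq_lintegral_ofReal ((integrable_f_cauchy hγ x).mul_const _)
        (Filter.Eventually.of_forall fun z =>
          mul_nonneg (mul_nonneg (f_nonneg _ _) (f_nonneg _ _)) (f_nonneg _ _))]
      rw [integral_mul_const, f_cauchy hγ x]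
    rw [lintegral_congr stepC]
    rw [← ofReal_integral_eq_lintegral_ofReal (integrable_voigt_integrand hσ hγ u)
      (Filter.Eventually.of_forall fun x =>
        mul_nonneg (by positivity) (f_nonneg _ _))]
    rw [voigtDensity_eq hσ]
  · apply Measurable.aemeasurable
    apply Measurable.ennreal_ofReal
    apply Measurable.mul
    · apply Measurable.mul
      · exact (measurable_f 1).comp measurable_fst
      · exact (by unfold f; fun_prop : Measurable (fun q : ℝ × ℝ => f (γ^2/q.1^2) q.2))
    · exact (measurable_f _).comp (measurable_const.sub measurable_snd)

lemma gaussianReal_one :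
    gaussianReal 0 1 = volume.withDensity fun x => ENNReal.ofReal (f 1 x) := by
  rw [← Real.toNNReal_one, gaussianReal_eq one_pos]

end VoigtAux

open VoigtAux in
theorem voigt_product_formula (σ γ : ℝ) (hσ : 0 < σ) (hγ : 0 < γ) :
    ((gaussianReal 0 1).prod ((gaussianReal 0 1).prod (gaussianReal 0 1))).map
        (fun z : ℝ × ℝ × ℝ => γ * z.2.1 / z.1 + σ * z.2.2) =
      ((gaussianReal 0 1).prod (gaussianReal 0 1)).map
        (fun z : ℝ × ℝ => Real.sqrt (σ ^ 2 + γ ^ 2 / z.1 ^ 2) * z.2) ∧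
    ((gaussianReal 0 1).prod ((gaussianReal 0 1).prod (gaussianReal 0 1))).map
        (fun z : ℝ × ℝ × ℝ => γ * z.2.1 / z.1 + σ * z.2.2) =
      volume.withDensity (fun u : ℝ => ENNReal.ofReal (voigtDensity σ γ u)) := by
  have hF3 : Measurable (fun z : ℝ × ℝ × ℝ => γ * z.2.1 / z.1 + σ * z.2.2) := by fun_prop
  have hF2 : Measurable (fun z : ℝ × ℝ => Real.sqrt (σ ^ 2 + γ ^ 2 / z.1 ^ 2) * z.2) := by
    fun_prop
  have haeG : ∀ᵐ z ∂(gaussianReal 0 1), z ≠ 0 := by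
    refine ae_iff.mpr ?_
    have h1 : {z : ℝ | ¬ z ≠ 0} = {0} := by ext z; simp
    rw [h1]
    exact gaussianReal_absolutelyContinuous 0 one_ne_zero Real.volume_singleton
  have slice_lhs : ∀ s : Set ℝ, MeasurableSet s → ∀ z : ℝ, z ≠ 0 →
      ((gaussianReal 0 1).prod (gaussianReal 0 1))
          (Prod.mk z ⁻¹' ((fun w : ℝ × ℝ × ℝ => γ * w.2.1 / w.1 + σ * w.2.2) ⁻¹' s))
        = gaussianReal 0 (σ^2 + γ^2/z^2).toNNReal s := by
    intro s hs z hz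
    have hset : Prod.mk z ⁻¹' ((fun w : ℝ × ℝ × ℝ => γ * w.2.1 / w.1 + σ * w.2.2) ⁻¹' s)
        = (fun p : ℝ × ℝ => (γ/z) * p.1 + σ * p.2) ⁻¹' s := by
      ext p
      simp only [Set.mem_preimage]
      rw [show γ * p.1 / z = γ/z * p.1 from by ring]
    rw [hset, ← Measure.map_apply (by fun_prop) hs, gaussian_comb (div_ne_zero hγ.ne' hz) hσ.ne',
      show (γ/z)^2 + σ^2 = σ^2 + γ^2/z^2 from by rw [div_pow]; ring]
  have slice_rhs : ∀ s : Set ℝ, MeasurableSet s → ∀ z : ℝ,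
      (gaussianReal 0 1) ((fun y : ℝ => Real.sqrt (σ^2 + γ^2/z^2) * y) ⁻¹' s)
        = gaussianReal 0 (σ^2 + γ^2/z^2).toNNReal s := by
    intro s hs z
    have hv0 : (0:ℝ) ≤ σ^2 + γ^2/z^2 := by positivity
    rw [show (fun y : ℝ => Real.sqrt (σ^2 + γ^2/z^2) * y) = (Real.sqrt (σ^2 + γ^2/z^2) * ·)
        from rfl,
      ← Measure.map_apply (by fun_prop) hs, gaussianReal_map_const_mul]
    simp only [mul_zero, mul_one]
    rw [show NNReal.mk ((Real.sqrt (σ^2 + γ^2/z^2))^2) (sq_nonneg _)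
        = ((Real.sqrt (σ^2 + γ^2/z^2))^2).toNNReal from (toNNReal_sq _).symm,
      Real.sq_sqrt hv0]
  have hL : ∀ s : Set ℝ, MeasurableSet s →
      (((gaussianReal 0 1).prod ((gaussianReal 0 1).prod (gaussianReal 0 1))).map
        (fun z : ℝ × ℝ × ℝ => γ * z.2.1 / z.1 + σ * z.2.2)) s
      = ∫⁻ z, gaussianReal 0 (σ^2 + γ^2/z^2).toNNReal s ∂(gaussianReal 0 1) := by
    intro s hs
    rw [Measure.map_apply hF3 hs, Measure.prod_apply (hF3 hs)]
    apply lintegral_congr_ae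
    filter_upwards [haeG] with z hz
    exact slice_lhs s hs z hz
  constructor
  · ext s hs
    rw [hL s hs, Measure.map_apply hF2 hs, Measure.prod_apply (hF2 hs)]
    exact lintegral_congr fun z => (slice_rhs s hs z).symm
  · ext s hs
    rw [hL s hs, withDensity_apply _ hs]
    have h2 : ∀ z : ℝ, gaussianReal 0 (σ^2 + γ^2/z^2).toNNReal s
        = ∫⁻ u, s.indicator (fun u => ENNReal.ofReal (f (σ^2 + γ^2/z^2) u)) u := by
      intro z
      have hv : (0:ℝ) < σ^2 + γ^2/z^2 := by positivity
      rw [gaussianReal_eq hv, withDensity_apply _ hs, ← lintegral_indicator hs]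
    rw [lintegral_congr h2, gaussianReal_one,
      lintegral_withDensity_eq_lintegral_mul _ ((measurable_f 1).ennreal_ofReal) ?hmeas]
    case hmeas =>
      apply Measurable.lintegral_prod_right
        (f := fun z u => s.indicator (fun u => ENNReal.ofReal (f (σ^2 + γ^2/z^2) u)) u)
      apply Measurable.indicator
      · exact (by unfold f; fun_prop :
          Measurable (fun q : ℝ × ℝ => f (σ^2 + γ^2/q.1^2) q.2)).ennreal_ofReal
      · exact measurable_snd hs
    simp only [Pi.mul_apply]
    have hstep : ∀ z : ℝ, ENNReal.ofReal (f 1 z)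
          * ∫⁻ u, s.indicator (fun u => ENNReal.ofReal (f (σ^2 + γ^2/z^2) u)) u
        = ∫⁻ u, ENNReal.ofReal (f 1 z)
            * s.indicator (fun u => ENNReal.ofReal (f (σ^2 + γ^2/z^2) u)) u :=
      fun z => (lintegral_const_mul' _ _ ENNReal.ofReal_ne_top).symm
    simp_rw [hstep]
    rw [lintegral_lintegral_swap]
    · have h3 : ∀ u : ℝ,
          (∫⁻ z, ENNReal.ofReal (f 1 z)
            * s.indicator (fun u => ENNReal.ofReal (f (σ^2 + γ^2/z^2) u)) u)
          = s.indicator (fun u => ENNReal.ofReal (voigtDensity σ γ u)) u := by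
        intro u
        by_cases hu : u ∈ s
        · simp only [Set.indicator_of_mem hu]
          rw [← K_eq hσ hγ u]
          apply lintegral_congr fun z => ?_
          rw [ENNReal.ofReal_mul (f_nonneg _ _)]
        · simp only [Set.indicator_of_notMem hu, mul_zero, lintegral_zero]
      rw [lintegral_congr h3, lintegral_indicator hs]
    · apply AEMeasurable.mul
      · exact ((measurable_f 1).comp measurable_fst).ennreal_ofReal.aemeasurable
      · apply Measurable.aemeasurable
        apply Measurable.indicator
        · exact (by unfold f; fun_prop :
            Measurable (fun q : ℝ × ℝ => f (σ^2 + γ^2/q.1^2) q.2)).ennreal_ofReal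
        · exact measurable_snd hs
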